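/- Let X(t) solve the β-polygon flow, let x_0 ∈ ℂ^N, and define ρ(t) = exp[ -t^{2/β} |X(t) - x_0|² - ∫_0^t (β/2) s^{2/β + 1} |M_{X(s)} X(s)|² ds ], where |·| is the Euclidean norm on ℂ^N. Then dρ/dt = -(2/β) ρ(t) t^{2/β - 1} | X(t) - x_0 + (β/2) t M_{X(t)} X(t) |². In particular ρ is nonincreasing for t > 0. -/

import Mathlib

open scoped RealInnerProductSpace

/-- The right-hand side of the β-polygon flow:
`(M_X X)_j = l_j^β (X_{j+1} - X_j) + l_{j-1}^β (X_{j-1} - X_j)` with `l_j = ‖X_{j+1} - X_j‖`. -/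
noncomputable def flowRHS {N : ℕ} [NeZero N] (β : ℝ) (X : ZMod N → ℂ) (j : ZMod N) : ℂ :=
  ((‖X (j + 1) - X j‖ ^ β : ℝ) : ℂ) * (X (j + 1) - X j)
    + ((‖X (j - 1) - X j‖ ^ β : ℝ) : ℂ) * (X (j - 1) - X j)

theorem stmt10 (N : ℕ) [NeZero N] (β : ℝ) (hβ : 0 < β) (X : ℝ → ZMod N → ℂ)
    (x0 : ZMod N → ℂ)
    (hflow : ∀ t j, HasDerivAt (fun s => X s j) (flowRHS β (X t) j) t)
    (ρ : ℝ → ℝ)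
    (hρ : ρ = fun t => Real.exp (-(t ^ (2 / β) * ∑ j, ‖X t j - x0 j‖ ^ 2)
      - ∫ s in (0:ℝ)..t, (β / 2) * s ^ (2 / β + 1) * ∑ j, ‖flowRHS β (X s) j‖ ^ 2)) :
    (∀ t : ℝ, 0 < t →
      HasDerivAt ρ
        (-(2 / β) * ρ t * t ^ (2 / β - 1)
          * ∑ j, ‖X t j - x0 j + (((β / 2) * t : ℝ) : ℂ) * flowRHS β (X t) j‖ ^ 2) t) ∧
    (∀ s t : ℝ, 0 < s → s ≤ t → ρ t ≤ ρ s) := by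
  subst hρ
  -- continuity facts
  have hrpow : ∀ p : ℝ, 0 ≤ p → Continuous (fun x : ℝ => x ^ p) := fun p hp =>
    continuous_iff_continuousAt.2 fun x => Real.continuousAt_rpow_const x p (Or.inr hp)
  have hXc : ∀ j, Continuous (fun s => X s j) := fun j =>
    continuous_iff_continuousAt.2 fun s => (hflow s j).continuousAt
  have hFc : ∀ j, Continuous (fun s => flowRHS β (X s) j) := by
    intro j
    unfold flowRHS
    exact ((Complex.continuous_ofReal.comp
        ((hrpow β hβ.le).comp ((hXc (j+1)).sub (hXc j)).norm)).mul
        ((hXc (j+1)).sub (hXc j))).add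
      ((Complex.continuous_ofReal.comp
        ((hrpow β hβ.le).comp ((hXc (j-1)).sub (hXc j)).norm)).mul
        ((hXc (j-1)).sub (hXc j)))
  have hcont : Continuous (fun s : ℝ =>
      (β / 2) * s ^ (2 / β + 1) * ∑ j, ‖flowRHS β (X s) j‖ ^ 2) := by
    have h1 : (0:ℝ) ≤ 2 / β + 1 := by positivity
    exact (continuous_const.mul (hrpow _ h1)).mul
      (continuous_finset_sum _ fun j _ => (hFc j).norm.pow 2)
  -- the key derivative computation
  have key : ∀ t : ℝ, 0 < t →
      HasDerivAt (fun t => Real.exp (-(t ^ (2 / β) * ∑ j, ‖X t j - x0 j‖ ^ 2)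
        - ∫ s in (0:ℝ)..t, (β / 2) * s ^ (2 / β + 1) * ∑ j, ‖flowRHS β (X s) j‖ ^ 2))
        (-(2 / β) * Real.exp (-(t ^ (2 / β) * ∑ j, ‖X t j - x0 j‖ ^ 2)
            - ∫ s in (0:ℝ)..t, (β / 2) * s ^ (2 / β + 1) * ∑ j, ‖flowRHS β (X s) j‖ ^ 2)
          * t ^ (2 / β - 1)
          * ∑ j, ‖X t j - x0 j + (((β / 2) * t : ℝ) : ℂ) * flowRHS β (X t) j‖ ^ 2) t := by
    intro t ht
    have hS : HasDerivAt (fun s => ∑ j, ‖X s j - x0 j‖ ^ 2)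
        (∑ j, 2 * ⟪X t j - x0 j, flowRHS β (X t) j⟫) t := by
      refine HasDerivAt.fun_sum fun j _ => ?_
      have hz : HasDerivAt (fun s => X s j - x0 j) (flowRHS β (X t) j) t :=
        (hflow t j).sub_const _
      have := HasDerivAt.inner ℝ hz hz
      simpa only [real_inner_self_eq_norm_sq, real_inner_comm (flowRHS β (X t) j), two_mul]
        using this
    have hA : HasDerivAt (fun s : ℝ => s ^ (2 / β) * ∑ j, ‖X s j - x0 j‖ ^ 2)
        ((2 / β * t ^ (2 / β - 1)) * (∑ j, ‖X t j - x0 j‖ ^ 2)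
          + t ^ (2 / β) * ∑ j, 2 * ⟪X t j - x0 j, flowRHS β (X t) j⟫) t :=
      (Real.hasDerivAt_rpow_const (Or.inl ht.ne')).mul hS
    have hG : HasDerivAt
        (fun u : ℝ => ∫ s in (0:ℝ)..u, (β / 2) * s ^ (2 / β + 1) * ∑ j, ‖flowRHS β (X s) j‖ ^ 2)
        ((β / 2) * t ^ (2 / β + 1) * ∑ j, ‖flowRHS β (X t) j‖ ^ 2) t :=
      intervalIntegral.integral_hasDerivAt_right (hcont.intervalIntegrable _ _)
        (hcont.stronglyMeasurableAtFilter _ _) hcont.continuousAt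
    have hmain := (hA.neg.sub hG).exp
    simp only [Pi.sub_apply, Pi.neg_apply] at hmain
    convert hmain using 1
    -- value equality
    have hterm : ∀ j, ‖X t j - x0 j + (((β / 2) * t : ℝ) : ℂ) * flowRHS β (X t) j‖ ^ 2
        = ‖X t j - x0 j‖ ^ 2 + ((β / 2) * t) * (2 * ⟪X t j - x0 j, flowRHS β (X t) j⟫)
          + ((β / 2) * t) ^ 2 * ‖flowRHS β (X t) j‖ ^ 2 := by
      intro j
      rw [← Complex.real_smul, norm_add_sq_real, real_inner_smul_right, norm_smul,
        mul_pow, Real.norm_eq_abs, sq_abs]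
      ring
    have hsum : (∑ j, ‖X t j - x0 j + (((β / 2) * t : ℝ) : ℂ) * flowRHS β (X t) j‖ ^ 2)
        = (∑ j, ‖X t j - x0 j‖ ^ 2)
          + ((β / 2) * t) * (∑ j, 2 * ⟪X t j - x0 j, flowRHS β (X t) j⟫)
          + ((β / 2) * t) ^ 2 * (∑ j, ‖flowRHS β (X t) j‖ ^ 2) := by
      rw [Finset.mul_sum, Finset.mul_sum, ← Finset.sum_add_distrib, ← Finset.sum_add_distrib]
      exact Finset.sum_congr rfl fun j _ => hterm j
    have e1 : t ^ (2 / β) = t ^ (2 / β - 1) * t := by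
      rw [← Real.rpow_add_one ht.ne', sub_add_cancel]
    have e2 : t ^ (2 / β + 1) = t ^ (2 / β - 1) * t * t := by
      rw [Real.rpow_add_one ht.ne' (2 / β), e1]
    rw [hsum, e2, e1]
    have hβ' : β ≠ 0 := hβ.ne'
    generalize t ^ (2 / β - 1) = u
    field_simp
    ring
  refine ⟨key, ?_⟩
  intro s t hs hst
  have hanti : AntitoneOn (fun t => Real.exp (-(t ^ (2 / β) * ∑ j, ‖X t j - x0 j‖ ^ 2)
      - ∫ u in (0:ℝ)..t, (β / 2) * u ^ (2 / β + 1) * ∑ j, ‖flowRHS β (X u) j‖ ^ 2))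
      (Set.Ici s) := by
    refine antitoneOn_of_deriv_nonpos (convex_Ici s) ?_ ?_ ?_
    · intro x hx
      exact ((key x (lt_of_lt_of_le hs hx)).continuousAt).continuousWithinAt
    · intro x hx
      rw [interior_Ici] at hx
      exact ((key x (hs.trans hx)).differentiableAt).differentiableWithinAt
    · intro x hx
      rw [interior_Ici] at hx
      have hx0 : 0 < x := hs.trans hx
      rw [(key x hx0).deriv]
      have h1 : (0:ℝ) ≤ (2 / β) * Real.exp (-(x ^ (2 / β) * ∑ j, ‖X x j - x0 j‖ ^ 2)
            - ∫ u in (0:ℝ)..x, (β / 2) * u ^ (2 / β + 1) * ∑ j, ‖flowRHS β (X u) j‖ ^ 2)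
          * x ^ (2 / β - 1)
          * ∑ j, ‖X x j - x0 j + (((β / 2) * x : ℝ) : ℂ) * flowRHS β (X x) j‖ ^ 2 := by
        have hsum : (0:ℝ) ≤ ∑ j, ‖X x j - x0 j + (((β / 2) * x : ℝ) : ℂ) * flowRHS β (X x) j‖ ^ 2 :=
          Finset.sum_nonneg fun j _ => by positivity
        have hr : (0:ℝ) ≤ x ^ (2 / β - 1) := (Real.rpow_pos_of_pos hx0 _).le
        positivity
      linarith [h1, (by ring : -(2 / β) * Real.exp (-(x ^ (2 / β) * ∑ j, ‖X x j - x0 j‖ ^ 2)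
            - ∫ u in (0:ℝ)..x, (β / 2) * u ^ (2 / β + 1) * ∑ j, ‖flowRHS β (X u) j‖ ^ 2)
          * x ^ (2 / β - 1)
          * ∑ j, ‖X x j - x0 j + (((β / 2) * x : ℝ) : ℂ) * flowRHS β (X x) j‖ ^ 2
          = -((2 / β) * Real.exp (-(x ^ (2 / β) * ∑ j, ‖X x j - x0 j‖ ^ 2)
            - ∫ u in (0:ℝ)..x, (β / 2) * u ^ (2 / β + 1) * ∑ j, ‖flowRHS β (X u) j‖ ^ 2)
          * x ^ (2 / β - 1)
          * ∑ j, ‖X x j - x0 j + (((β / 2) * x : ℝ) : ℂ) * flowRHS β (X x) j‖ ^ 2))]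
  exact hanti Set.self_mem_Ici (Set.mem_Ici.2 hst) hst
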